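/- arXiv:2602.02544 — 5 statements merged into one kernel-verified Lean document; each statement's English description precedes it below -/
import Mathlib

section
/- Let h₁, h₂ ∈ ℝ^d be nonzero with H_min ≤ ‖h₁‖, ‖h₂‖ ≤ H_max, and let Δ = H_max - H_min. Then ‖h₁ - h₂‖ ≤ Δ + √2 · H_max · √(1 - S_cos(h₁,h₂)). -/
noncomputable def scos {d : ℕ} (x y : EuclideanSpace ℝ (Fin d)) : ℝ :=
  (inner ℝ x y : ℝ) / (‖x‖ * ‖y‖)

lemma sqrt_add_le' (x y : ℝ) (hx : 0 ≤ x) (hy : 0 ≤ y) :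
    Real.sqrt (x + y) ≤ Real.sqrt x + Real.sqrt y := by
  rw [show x + y = Real.sqrt x ^ 2 + Real.sqrt y ^ 2 by
    rw [Real.sq_sqrt hx, Real.sq_sqrt hy]]
  have h : Real.sqrt x ^ 2 + Real.sqrt y ^ 2 ≤ (Real.sqrt x + Real.sqrt y) ^ 2 := by
    nlinarith [Real.sqrt_nonneg x, Real.sqrt_nonneg y]
  calc Real.sqrt (Real.sqrt x ^ 2 + Real.sqrt y ^ 2)
      ≤ Real.sqrt ((Real.sqrt x + Real.sqrt y) ^ 2) := Real.sqrt_le_sqrt h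
    _ = Real.sqrt x + Real.sqrt y := by
        rw [Real.sqrt_sq (by positivity)]

theorem dist_le_of_cosine {d : ℕ} (h₁ h₂ : EuclideanSpace ℝ (Fin d))
    (h1 : h₁ ≠ 0) (h2 : h₂ ≠ 0) (Hmin Hmax : ℝ)
    (hb1 : Hmin ≤ ‖h₁‖) (hb1' : ‖h₁‖ ≤ Hmax)
    (hb2 : Hmin ≤ ‖h₂‖) (hb2' : ‖h₂‖ ≤ Hmax) :
    ‖h₁ - h₂‖ ≤ (Hmax - Hmin) + Real.sqrt 2 * Hmax * Real.sqrt (1 - scos h₁ h₂) := by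
  have ha : 0 < ‖h₁‖ := norm_pos_iff.mpr h1
  have hb : 0 < ‖h₂‖ := norm_pos_iff.mpr h2
  have hM : 0 < Hmax := lt_of_lt_of_le ha hb1'
  have hcs : (inner ℝ h₁ h₂ : ℝ) ≤ ‖h₁‖ * ‖h₂‖ := real_inner_le_norm h₁ h₂
  have hc1 : scos h₁ h₂ ≤ 1 := by
    rw [scos, div_le_one (by positivity)]; exact hcs
  have hc0 : 0 ≤ 1 - scos h₁ h₂ := by linarith
  have hinner : (inner ℝ h₁ h₂ : ℝ) = (‖h₁‖ * ‖h₂‖) * scos h₁ h₂ := by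
    rw [scos]; field_simp
  have hsq : ‖h₁ - h₂‖ ^ 2
      = (‖h₁‖ - ‖h₂‖) ^ 2 + 2 * (‖h₁‖ * ‖h₂‖) * (1 - scos h₁ h₂) := by
    rw [norm_sub_sq_real, hinner]; ring
  have key : ‖h₁ - h₂‖ ≤ |‖h₁‖ - ‖h₂‖|
      + Real.sqrt (2 * (‖h₁‖ * ‖h₂‖) * (1 - scos h₁ h₂)) := by
    have := sqrt_add_le' ((‖h₁‖ - ‖h₂‖) ^ 2) (2 * (‖h₁‖ * ‖h₂‖) * (1 - scos h₁ h₂))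
      (by positivity) (by positivity)
    rw [Real.sqrt_sq_eq_abs] at this
    calc ‖h₁ - h₂‖ = Real.sqrt (‖h₁ - h₂‖ ^ 2) := by rw [Real.sqrt_sq (norm_nonneg _)]
      _ = Real.sqrt ((‖h₁‖ - ‖h₂‖) ^ 2 + 2 * (‖h₁‖ * ‖h₂‖) * (1 - scos h₁ h₂)) := by
          rw [hsq]
      _ ≤ _ := this
  have habs : |‖h₁‖ - ‖h₂‖| ≤ Hmax - Hmin := abs_sub_le_iff.mpr ⟨by linarith, by linarith⟩
  have hterm : Real.sqrt (2 * (‖h₁‖ * ‖h₂‖) * (1 - scos h₁ h₂))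
      ≤ Real.sqrt 2 * Hmax * Real.sqrt (1 - scos h₁ h₂) := by
    have h1' : 2 * (‖h₁‖ * ‖h₂‖) * (1 - scos h₁ h₂)
        ≤ 2 * Hmax ^ 2 * (1 - scos h₁ h₂) := by
      have hab : ‖h₁‖ * ‖h₂‖ ≤ Hmax ^ 2 := by nlinarith
      nlinarith [mul_le_mul_of_nonneg_right hab hc0]
    calc Real.sqrt (2 * (‖h₁‖ * ‖h₂‖) * (1 - scos h₁ h₂))
        ≤ Real.sqrt (2 * Hmax ^ 2 * (1 - scos h₁ h₂)) := Real.sqrt_le_sqrt h1'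
      _ = Real.sqrt 2 * Hmax * Real.sqrt (1 - scos h₁ h₂) := by
          rw [Real.sqrt_mul (by positivity), Real.sqrt_mul (by norm_num),
            Real.sqrt_sq hM.le]
  linarith
end

section
/- Let f : ℝ^d → ℝ^m be L-Lipschitz, and let h₁, h₂ ∈ ℝ^d be nonzero with H_min ≤ ‖hᵢ‖ ≤ H_max. Then ‖f(h₁) - f(h₂)‖ ≤ L(H_max - H_min) + L√2·H_max·√(1 - S_cos(h₁,h₂)). -/
theorem lipschitz_cosine_bound {d m : ℕ}
    (f : EuclideanSpace ℝ (Fin d) → EuclideanSpace ℝ (Fin m))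
    (L : NNReal) (hf : LipschitzWith L f)
    (h₁ h₂ : EuclideanSpace ℝ (Fin d)) (h1 : h₁ ≠ 0) (h2 : h₂ ≠ 0)
    (Hmin Hmax : ℝ)
    (hb1 : Hmin ≤ ‖h₁‖) (hb1' : ‖h₁‖ ≤ Hmax)
    (hb2 : Hmin ≤ ‖h₂‖) (hb2' : ‖h₂‖ ≤ Hmax) :
    ‖f h₁ - f h₂‖ ≤
      (L : ℝ) * (Hmax - Hmin) +
        (L : ℝ) * Real.sqrt 2 * Hmax * Real.sqrt (1 - scos h₁ h₂) := by
  have ha : 0 < ‖h₁‖ := norm_pos_iff.mpr h1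
  have hb : 0 < ‖h₂‖ := norm_pos_iff.mpr h2
  set a := ‖h₁‖ with hA
  set b := ‖h₂‖ with hB
  set c := (inner ℝ h₁ h₂ : ℝ) with hC
  have hcs : c ≤ a * b := real_inner_le_norm h₁ h₂
  have hHmax : 0 < Hmax := lt_of_lt_of_le ha hb1'
  have hab : (0:ℝ) < a * b := mul_pos ha hb
  have h1s : 1 - scos h₁ h₂ = (a * b - c) / (a * b) := by
    have : scos h₁ h₂ = c / (a * b) := rfl
    rw [this]
    field_simp
  have hnn : 0 ≤ 1 - scos h₁ h₂ := by
    rw [h1s]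
    exact div_nonneg (by linarith) hab.le
  set s := Real.sqrt 2 * Hmax * Real.sqrt (1 - scos h₁ h₂) with hS
  have hsnn : 0 ≤ s := by positivity
  have hs2 : s ^ 2 = 2 * Hmax ^ 2 * (1 - scos h₁ h₂) := by
    rw [hS, mul_pow, mul_pow, Real.sq_sqrt (by norm_num : (2:ℝ) ≥ 0),
      Real.sq_sqrt hnn]
  have habc : a * b * (1 - scos h₁ h₂) = a * b - c := by
    rw [h1s, mul_div_cancel₀ _ hab.ne']
  have habmax : a * b ≤ Hmax ^ 2 := by nlinarith
  have hnormsq : ‖h₁ - h₂‖ ^ 2 = a ^ 2 - 2 * c + b ^ 2 :=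
    norm_sub_sq_real h₁ h₂
  have hTnn : 0 ≤ (Hmax - Hmin) + s := by
    have : Hmin ≤ Hmax := le_trans hb1 hb1'
    linarith
  have hkey : ‖h₁ - h₂‖ ≤ (Hmax - Hmin) + s := by
    have hsq : ‖h₁ - h₂‖ ^ 2 ≤ ((Hmax - Hmin) + s) ^ 2 := by
      have h2ab : 2 * (a * b - c) ≤ 2 * Hmax ^ 2 * (1 - scos h₁ h₂) := by
        nlinarith
      nlinarith [sq_nonneg (a - b), hs2]
    nlinarith [norm_nonneg (h₁ - h₂)]
  calc ‖f h₁ - f h₂‖ ≤ (L : ℝ) * ‖h₁ - h₂‖ := by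
        simpa [dist_eq_norm] using hf.dist_le_mul h₁ h₂
    _ ≤ (L : ℝ) * ((Hmax - Hmin) + s) := by
        exact mul_le_mul_of_nonneg_left hkey L.coe_nonneg
    _ = (L : ℝ) * (Hmax - Hmin) +
        (L : ℝ) * Real.sqrt 2 * Hmax * Real.sqrt (1 - scos h₁ h₂) := by
        rw [hS]; ring
end

section
/- Let W ∈ ℝ^{m×d}, A = U_r Λ_r V_rᵀ its rank-r truncated SVD, R = W − A. For h₁, h₂ ∈ ℝ^d with Ah₁ ≠ 0 and Ah₂ ≠ 0, writing rᵢ = ‖Rhᵢ‖ and aᵢ = ‖Ahᵢ‖, one has |S_cos(Wh₁, Wh₂) − S_cos(Ah₁, Ah₂)| ≤ ½(r₁/a₁ + r₂/a₂)². -/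
open Matrix

lemma aux_scalar (t1 t2 q1 q2 : ℝ) (ht1 : 0 ≤ t1) (ht2 : 0 ≤ t2)
    (hq1 : q1^2 = 1 + t1^2) (hq2 : q2^2 = 1 + t2^2)
    (hq1' : 1 ≤ q1) (hq2' : 1 ≤ q2) :
    q1 * q2 * (1 - (1/2) * (t1 + t2)^2) ≤ 1 - t1 * t2 := by
  have hq12 : 1 ≤ q1 * q2 := by nlinarith
  rcases le_or_gt (1 - (1/2) * (t1 + t2)^2) 0 with h | h
  · nlinarith [mul_nonneg (sub_nonneg.mpr hq12) (neg_nonneg.mpr h), sq_nonneg (t1 - t2),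
      mul_nonneg ht1 ht2]
  · nlinarith [sq_nonneg (q1 - q2), sq_nonneg (t1 - t2), sq_nonneg (t1 + t2),
      mul_nonneg (mul_nonneg ht1 ht2) (sq_nonneg (t1 + t2))]

lemma key_scalar (a1 a2 r1 r2 c ρ : ℝ) (ha1 : 0 < a1) (ha2 : 0 < a2)
    (hr1 : 0 ≤ r1) (hr2 : 0 ≤ r2) (hc : |c| ≤ a1 * a2) (hρ : |ρ| ≤ r1 * r2) :
    |(c + ρ) / (Real.sqrt (a1^2 + r1^2) * Real.sqrt (a2^2 + r2^2)) - c / (a1 * a2)| ≤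
      (1/2) * (r1 / a1 + r2 / a2)^2 := by
  set p1 := Real.sqrt (a1^2 + r1^2) with hp1def
  set p2 := Real.sqrt (a2^2 + r2^2) with hp2def
  have hp1sq : p1^2 = a1^2 + r1^2 := Real.sq_sqrt (by positivity)
  have hp2sq : p2^2 = a2^2 + r2^2 := Real.sq_sqrt (by positivity)
  have hp1a : a1 ≤ p1 := by
    rw [hp1def]; exact (Real.le_sqrt ha1.le (by positivity)).mpr (by nlinarith [sq_nonneg r1])
  have hp2a : a2 ≤ p2 := by
    rw [hp2def]; exact (Real.le_sqrt ha2.le (by positivity)).mpr (by nlinarith [sq_nonneg r2])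
  have hp1 : 0 < p1 := lt_of_lt_of_le ha1 hp1a
  have hp2 : 0 < p2 := lt_of_lt_of_le ha2 hp2a
  have hpa : a1 * a2 ≤ p1 * p2 := mul_le_mul hp1a hp2a ha2.le hp1.le
  -- rewrite the difference with common denominator
  have hrw : (c + ρ) / (p1 * p2) - c / (a1 * a2)
      = (c * (a1 * a2 - p1 * p2) + ρ * (a1 * a2)) / (p1 * p2 * (a1 * a2)) := by
    field_simp
    ring
  rw [hrw]
  have hden : 0 < p1 * p2 * (a1 * a2) := by positivity
  rw [abs_div, abs_of_pos hden, div_le_iff₀ hden]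
  have hnum : |c * (a1 * a2 - p1 * p2) + ρ * (a1 * a2)|
      ≤ (a1 * a2) * (p1 * p2 - a1 * a2) + (r1 * r2) * (a1 * a2) := by
    calc |c * (a1 * a2 - p1 * p2) + ρ * (a1 * a2)|
        ≤ |c| * |a1 * a2 - p1 * p2| + |ρ| * (a1 * a2) := by
          refine (abs_add_le _ _).trans ?_
          rw [abs_mul, abs_mul, abs_of_pos (by positivity : (0:ℝ) < a1 * a2)]
      _ ≤ (a1 * a2) * (p1 * p2 - a1 * a2) + (r1 * r2) * (a1 * a2) := by
          rw [abs_sub_comm, abs_of_nonneg (sub_nonneg.mpr hpa)]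
          have h1 : |c| * (p1 * p2 - a1 * a2) ≤ (a1 * a2) * (p1 * p2 - a1 * a2) :=
            mul_le_mul_of_nonneg_right hc (sub_nonneg.mpr hpa)
          have h2 : |ρ| * (a1 * a2) ≤ (r1 * r2) * (a1 * a2) :=
            mul_le_mul_of_nonneg_right hρ (by positivity)
          linarith
  refine hnum.trans ?_
  -- apply the core inequality with t_i = r_i/a_i, q_i = p_i/a_i
  have haux := aux_scalar (r1/a1) (r2/a2) (p1/a1) (p2/a2)
    (by positivity) (by positivity)
    (by rw [div_pow, div_pow, hp1sq]; field_simp)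
    (by rw [div_pow, div_pow, hp2sq]; field_simp)
    ((one_le_div ha1).mpr hp1a) ((one_le_div ha2).mpr hp2a)
  have key : p1 * p2 * (1 - (1/2) * (r1/a1 + r2/a2)^2) ≤ a1 * a2 - r1 * r2 := by
    have := mul_le_mul_of_nonneg_left haux (by positivity : (0:ℝ) ≤ a1 * a2)
    have e1 : a1 * a2 * (p1/a1 * (p2/a2) * (1 - 1/2 * (r1/a1 + r2/a2)^2))
        = p1 * p2 * (1 - (1/2) * (r1/a1 + r2/a2)^2) := by field_simp
    have e2 : a1 * a2 * (1 - r1/a1 * (r2/a2)) = a1 * a2 - r1 * r2 := by field_simp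
    linarith [e1 ▸ e2 ▸ this]
  nlinarith [mul_pos hp1 hp2, sq_nonneg (r1/a1 + r2/a2)]

theorem lowrank_cosine_error_bound {m d : ℕ}
    (W A R : Matrix (Fin m) (Fin d) ℝ) (hW : W = A + R) (hRA : Rᵀ * A = 0)
    (h₁ h₂ : EuclideanSpace ℝ (Fin d))
    (hA1 : Matrix.toEuclideanLin A h₁ ≠ 0) (hA2 : Matrix.toEuclideanLin A h₂ ≠ 0) :
    |scos (Matrix.toEuclideanLin W h₁) (Matrix.toEuclideanLin W h₂) -
        scos (Matrix.toEuclideanLin A h₁) (Matrix.toEuclideanLin A h₂)| ≤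
      (1 / 2) *
        (‖Matrix.toEuclideanLin R h₁‖ / ‖Matrix.toEuclideanLin A h₁‖ +
            ‖Matrix.toEuclideanLin R h₂‖ / ‖Matrix.toEuclideanLin A h₂‖) ^ 2 := by
  have horth : ∀ x y : EuclideanSpace ℝ (Fin d),
      (inner ℝ (Matrix.toEuclideanLin R x) (Matrix.toEuclideanLin A y) : ℝ) = 0 := by
    intro x y
    rw [Matrix.toEuclideanLin_apply, Matrix.toEuclideanLin_apply]
    set xv := (WithLp.equiv 2 (Fin d → ℝ)) x
    set yv := (WithLp.equiv 2 (Fin d → ℝ)) y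
    have hdp : (R *ᵥ xv) ⬝ᵥ (A *ᵥ yv) = 0 := by
      have : xv ⬝ᵥ ((Rᵀ * A) *ᵥ yv) = (R *ᵥ xv) ⬝ᵥ (A *ᵥ yv) := by
        rw [← Matrix.mulVec_mulVec, Matrix.dotProduct_mulVec xv Rᵀ, Matrix.vecMul_transpose]
      rw [← this, hRA, Matrix.zero_mulVec, dotProduct_zero]
    simpa [PiLp.inner_apply, dotProduct, xv, yv, mul_comm] using hdp
  set u1 := Matrix.toEuclideanLin A h₁
  set u2 := Matrix.toEuclideanLin A h₂
  set v1 := Matrix.toEuclideanLin R h₁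
  set v2 := Matrix.toEuclideanLin R h₂
  have hw1 : Matrix.toEuclideanLin W h₁ = u1 + v1 := by rw [hW, map_add]; rfl
  have hw2 : Matrix.toEuclideanLin W h₂ = u2 + v2 := by rw [hW, map_add]; rfl
  have ha1 : 0 < ‖u1‖ := norm_pos_iff.mpr hA1
  have ha2 : 0 < ‖u2‖ := norm_pos_iff.mpr hA2
  have h12 : (inner ℝ v1 u2 : ℝ) = 0 := horth h₁ h₂
  have h21 : (inner ℝ u1 v2 : ℝ) = 0 := by rw [real_inner_comm]; exact horth h₂ h₁
  have hnw1 : ‖u1 + v1‖ = Real.sqrt (‖u1‖^2 + ‖v1‖^2) := by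
    rw [← Real.sqrt_sq (norm_nonneg (u1 + v1))]
    congr 1
    have := @norm_add_sq_real _ _ _ u1 v1
    rw [this, real_inner_comm, horth h₁ h₁]; ring
  have hnw2 : ‖u2 + v2‖ = Real.sqrt (‖u2‖^2 + ‖v2‖^2) := by
    rw [← Real.sqrt_sq (norm_nonneg (u2 + v2))]
    congr 1
    have := @norm_add_sq_real _ _ _ u2 v2
    rw [this, real_inner_comm, horth h₂ h₂]; ring
  have hinner : (inner ℝ (u1 + v1) (u2 + v2) : ℝ) = inner ℝ u1 u2 + inner ℝ v1 v2 := by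
    rw [inner_add_left, inner_add_right, inner_add_right, h12, h21]; ring
  rw [hw1, hw2]
  unfold scos
  rw [hinner, hnw1, hnw2]
  exact key_scalar ‖u1‖ ‖u2‖ ‖v1‖ ‖v2‖ _ _ ha1 ha2 (norm_nonneg v1) (norm_nonneg v2)
    (abs_real_inner_le_norm u1 u2) (abs_real_inner_le_norm v1 v2)
end

section
/- Let W ∈ ℝ^{m×d} have singular values λ₁ ≥ … ≥ λ_{r+1} ≥ … with λ_r > 0, and let A = U_r Λ_r V_rᵀ be its rank-r truncation. For h₁, h₂ ∈ ℝ^d with V_rᵀhᵢ ≠ 0, |S_cos(Wh₁, Wh₂) − S_cos(Λ_r V_rᵀ h₁, Λ_r V_rᵀ h₂)| ≤ ½ (λ_{r+1}/λ_r)² (‖h₁‖/‖V_rᵀh₁‖ + ‖h₂‖/‖V_rᵀh₂‖)². -/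
set_option maxHeartbeats 2000000


open Matrix

private lemma tsvd_coord {a b : ℕ} (M : Matrix (Fin a) (Fin b) ℝ)
    (v : EuclideanSpace ℝ (Fin b)) (i : Fin a) :
    Matrix.toEuclideanLin M v i = ∑ j, M i j * v j := by
  rw [Matrix.toEuclideanLin_apply]; rfl

private lemma tsvd_inner_coords {a : ℕ} (u v : EuclideanSpace ℝ (Fin a)) :
    (inner ℝ u v : ℝ) = ∑ i, u i * v i := by
  simp [PiLp.inner_apply, mul_comm]

private lemma tsvd_inner_eq {a b : ℕ} (M : Matrix (Fin a) (Fin b) ℝ)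
    (x y : EuclideanSpace ℝ (Fin b)) :
    (inner ℝ (Matrix.toEuclideanLin M x) (Matrix.toEuclideanLin M y) : ℝ)
      = (fun i => x i) ⬝ᵥ ((Mᵀ * M) *ᵥ (fun j => y j)) := by
  have h0 : (inner ℝ (Matrix.toEuclideanLin M x) (Matrix.toEuclideanLin M y) : ℝ)
      = (M *ᵥ fun i => x i) ⬝ᵥ (M *ᵥ fun j => y j) := by
    rw [tsvd_inner_coords]; simp [tsvd_coord, dotProduct, Matrix.mulVec]
  rw [h0]
  conv_rhs => rw [Matrix.dotProduct_mulVec, ← Matrix.vecMul_vecMul, Matrix.vecMul_transpose]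
  rw [Matrix.dotProduct_mulVec]

private lemma tsvd_adj {a b : ℕ} (M : Matrix (Fin a) (Fin b) ℝ)
    (x : EuclideanSpace ℝ (Fin b)) (z : EuclideanSpace ℝ (Fin a)) :
    (inner ℝ (Matrix.toEuclideanLin M x) z : ℝ)
      = inner ℝ x (Matrix.toEuclideanLin Mᵀ z) := by
  simp only [tsvd_inner_coords, tsvd_coord, Finset.sum_mul, Finset.mul_sum,
    Matrix.transpose_apply]
  rw [Finset.sum_comm]
  congr 1; ext i; congr 1; ext j; ring

private lemma tsvd_sq_le {x y : ℝ} (hy : 0 ≤ y) (h : x ^ 2 ≤ y ^ 2) : x ≤ y := by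
  nlinarith [sq_nonneg (x - y), sq_nonneg (x + y)]

private lemma tsvd_norm_sq {a : ℕ} (u : EuclideanSpace ℝ (Fin a)) :
    ‖u‖ ^ 2 = ∑ i, u i * u i := by
  rw [← real_inner_self_eq_norm_sq, tsvd_inner_coords]

private lemma tsvd_split_sum {k r : ℕ} (hrk : r ≤ k) (G : Fin k → ℝ) :
    ∑ l : Fin k, G l
      = (∑ j : Fin r, G (Fin.castLE hrk j))
        + ∑ l ∈ Finset.Ico r k, (if h : l < k then G ⟨l, h⟩ else 0) := by
  have h1 : ∑ l : Fin k, G l = ∑ l ∈ Finset.range k, (if h : l < k then G ⟨l, h⟩ else 0) := by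
    rw [← Fin.sum_univ_eq_sum_range]
    exact Finset.sum_congr rfl fun i _ => by simp [i.isLt]
  have h2 : ∑ j : Fin r, G (Fin.castLE hrk j)
      = ∑ l ∈ Finset.range r, (if h : l < k then G ⟨l, h⟩ else 0) := by
    rw [← Fin.sum_univ_eq_sum_range]
    refine Finset.sum_congr rfl fun i _ => ?_
    have : (i : ℕ) < k := lt_of_lt_of_le i.isLt hrk
    simp only [this, dif_pos]
    rfl
  rw [h1, h2, Finset.sum_range_add_sum_Ico _ hrk]

private lemma tsvd_key_ineq (a b p₁ p₂ q₁ q₂ t₁ t₂ n₁ n₂ : ℝ)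
    (hp₁ : 0 < p₁) (hp₂ : 0 < p₂)
    (ht₁ : 0 ≤ t₁) (ht₂ : 0 ≤ t₂)
    (hq₁ : 0 ≤ q₁) (hq₂ : 0 ≤ q₂)
    (hb : |b| ≤ p₁ * p₂) (hab : |a - b| ≤ q₁ * q₂)
    (hqt₁ : q₁ ≤ t₁ * p₁) (hqt₂ : q₂ ≤ t₂ * p₂)
    (hn₁ : n₁ ^ 2 ≤ p₁ ^ 2 + q₁ ^ 2) (hn₂ : n₂ ^ 2 ≤ p₂ ^ 2 + q₂ ^ 2)
    (hpn₁ : p₁ ≤ n₁) (hpn₂ : p₂ ≤ n₂) :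
    |a / (n₁ * n₂) - b / (p₁ * p₂)| ≤ (1 / 2) * (t₁ + t₂) ^ 2 := by
  have hn₁0 : 0 < n₁ := hp₁.trans_le hpn₁
  have hn₂0 : 0 < n₂ := hp₂.trans_le hpn₂
  have hnn : 0 < n₁ * n₂ := mul_pos hn₁0 hn₂0
  have hpp : 0 < p₁ * p₂ := mul_pos hp₁ hp₂
  have hppnn : p₁ * p₂ ≤ n₁ * n₂ := mul_le_mul hpn₁ hpn₂ hp₂.le hn₁0.le
  have step1 : |a / (n₁ * n₂) - b / (p₁ * p₂)| ≤
      |a - b| / (n₁ * n₂) + |b| * (1 / (p₁ * p₂) - 1 / (n₁ * n₂)) := by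
    have e : a / (n₁ * n₂) - b / (p₁ * p₂)
        = (a - b) / (n₁ * n₂) - b * (1 / (p₁ * p₂) - 1 / (n₁ * n₂)) := by
      field_simp; ring
    rw [e]
    refine (abs_sub _ _).trans ?_
    rw [abs_div, abs_of_pos hnn, abs_mul]
    gcongr
    rw [abs_of_nonneg]
    have := one_div_le_one_div_of_le hpp hppnn
    linarith
  have term1 : |a - b| / (n₁ * n₂) ≤ t₁ * t₂ := by
    rw [div_le_iff₀ hnn]
    calc |a - b| ≤ q₁ * q₂ := hab
      _ ≤ (t₁ * p₁) * (t₂ * p₂) := by gcongr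
      _ ≤ t₁ * t₂ * (n₁ * n₂) := by
          have e : (t₁ * p₁) * (t₂ * p₂) = t₁ * t₂ * (p₁ * p₂) := by ring
          rw [e]; gcongr
  have hdiv : 0 ≤ 1 / (p₁ * p₂) - 1 / (n₁ * n₂) := by
    have := one_div_le_one_div_of_le hpp hppnn
    linarith
  have term2 : |b| * (1 / (p₁ * p₂) - 1 / (n₁ * n₂)) ≤ 1 - (p₁ * p₂) / (n₁ * n₂) := by
    calc |b| * (1 / (p₁ * p₂) - 1 / (n₁ * n₂)) ≤ (p₁ * p₂) * (1 / (p₁ * p₂) - 1 / (n₁ * n₂)) := by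
          gcongr
      _ = 1 - (p₁ * p₂) / (n₁ * n₂) := by field_simp
  set s : ℝ := (t₁ ^ 2 + t₂ ^ 2) / 2 with hs
  have hs0 : 0 ≤ s := by positivity
  have term3 : 1 - (p₁ * p₂) / (n₁ * n₂) ≤ s := by
    rcases le_or_gt 1 s with h | h
    · have : 0 ≤ (p₁ * p₂) / (n₁ * n₂) := by positivity
      linarith
    · have h1s : 0 < 1 - s := by linarith
      have key : (1 - s) * (n₁ * n₂) ≤ p₁ * p₂ := by
        have hq₁2 : q₁ ^ 2 ≤ t₁ ^ 2 * p₁ ^ 2 := by nlinarith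
        have hq₂2 : q₂ ^ 2 ≤ t₂ ^ 2 * p₂ ^ 2 := by nlinarith
        have e1 : (n₁ * n₂) ^ 2 ≤ (p₁ ^ 2 + q₁ ^ 2) * (p₂ ^ 2 + q₂ ^ 2) := by
          calc (n₁ * n₂) ^ 2 = n₁ ^ 2 * n₂ ^ 2 := by ring
            _ ≤ (p₁ ^ 2 + q₁ ^ 2) * (p₂ ^ 2 + q₂ ^ 2) :=
                mul_le_mul hn₁ hn₂ (sq_nonneg n₂) (by positivity)
        have f1 : p₁ ^ 2 + q₁ ^ 2 ≤ p₁ ^ 2 * (1 + t₁ ^ 2) := by nlinarith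
        have f2 : p₂ ^ 2 + q₂ ^ 2 ≤ p₂ ^ 2 * (1 + t₂ ^ 2) := by nlinarith
        have amgm : (1 + t₁ ^ 2) * (1 + t₂ ^ 2) ≤ (1 + s) ^ 2 := by
          rw [hs]; nlinarith [sq_nonneg (t₁ ^ 2 - t₂ ^ 2)]
        have e2 : (p₁ ^ 2 + q₁ ^ 2) * (p₂ ^ 2 + q₂ ^ 2) ≤ (p₁ * p₂) ^ 2 * (1 + s) ^ 2 := by
          calc (p₁ ^ 2 + q₁ ^ 2) * (p₂ ^ 2 + q₂ ^ 2)
              ≤ (p₁ ^ 2 * (1 + t₁ ^ 2)) * (p₂ ^ 2 * (1 + t₂ ^ 2)) :=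
                mul_le_mul f1 f2 (by positivity) (by positivity)
            _ = (p₁ * p₂) ^ 2 * ((1 + t₁ ^ 2) * (1 + t₂ ^ 2)) := by ring
            _ ≤ (p₁ * p₂) ^ 2 * (1 + s) ^ 2 := by gcongr
        have e3 : ((1 - s) * (n₁ * n₂)) ^ 2 ≤ (p₁ * p₂) ^ 2 := by
          have hs1 : s ^ 2 ≤ 1 := by nlinarith
          have hs4 : s ^ 2 * s ^ 2 ≤ s ^ 2 * 1 :=
            mul_le_mul_of_nonneg_left hs1 (sq_nonneg s)
          have g1 : ((1 - s) * (1 + s)) ^ 2 ≤ 1 := by nlinarith [sq_nonneg s]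
          calc ((1 - s) * (n₁ * n₂)) ^ 2 = (1 - s) ^ 2 * (n₁ * n₂) ^ 2 := by ring
            _ ≤ (1 - s) ^ 2 * ((p₁ * p₂) ^ 2 * (1 + s) ^ 2) := by
                have := e1.trans e2; gcongr
            _ = (p₁ * p₂) ^ 2 * ((1 - s) * (1 + s)) ^ 2 := by ring
            _ ≤ (p₁ * p₂) ^ 2 * 1 := by gcongr
            _ = (p₁ * p₂) ^ 2 := by ring
        have h1 : 0 ≤ (1 - s) * (n₁ * n₂) := by positivity
        nlinarith [e3]
      rw [sub_le_iff_le_add]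
      have : (1 - s) ≤ (p₁ * p₂) / (n₁ * n₂) := by
        rw [le_div_iff₀ hnn]; linarith [key]
      linarith
  have tt : t₁ * t₂ + s = (1/2) * (t₁ + t₂) ^ 2 := by rw [hs]; ring
  calc |a / (n₁ * n₂) - b / (p₁ * p₂)|
      ≤ |a - b| / (n₁ * n₂) + |b| * (1 / (p₁ * p₂) - 1 / (n₁ * n₂)) := step1
    _ ≤ t₁ * t₂ + (1 - (p₁ * p₂) / (n₁ * n₂)) := by linarith
    _ ≤ t₁ * t₂ + s := by linarith
    _ = (1/2) * (t₁ + t₂) ^ 2 := tt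

theorem truncated_svd_cosine_error_bound {m d k : ℕ} (r : ℕ)
    (hr : r < k) (hr0 : 0 < r)
    (U : Matrix (Fin m) (Fin k) ℝ) (V : Matrix (Fin d) (Fin k) ℝ)
    (σ : Fin k → ℝ) (hU : Uᵀ * U = 1) (hV : Vᵀ * V = 1)
    (hσmono : Antitone σ) (hσ0 : ∀ i, 0 ≤ σ i)
    (hσr : 0 < σ ⟨r - 1, by omega⟩)
    (W : Matrix (Fin m) (Fin d) ℝ) (hW : W = U * diagonal σ * Vᵀ)
    (Ur : Matrix (Fin m) (Fin r) ℝ) (hUr : Ur = U.submatrix id (Fin.castLE hr.le))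
    (Vr : Matrix (Fin d) (Fin r) ℝ) (hVr : Vr = V.submatrix id (Fin.castLE hr.le))
    (Λr : Matrix (Fin r) (Fin r) ℝ)
    (hΛr : Λr = diagonal (fun i : Fin r => σ (Fin.castLE hr.le i)))
    (h₁ h₂ : EuclideanSpace ℝ (Fin d))
    (hV1 : Matrix.toEuclideanLin Vrᵀ h₁ ≠ 0) (hV2 : Matrix.toEuclideanLin Vrᵀ h₂ ≠ 0) :
    |scos (Matrix.toEuclideanLin W h₁) (Matrix.toEuclideanLin W h₂) -
        scos (Matrix.toEuclideanLin (Λr * Vrᵀ) h₁) (Matrix.toEuclideanLin (Λr * Vrᵀ) h₂)| ≤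
      (1 / 2) * (σ ⟨r, hr⟩ / σ ⟨r - 1, by omega⟩) ^ 2 *
        (‖h₁‖ / ‖Matrix.toEuclideanLin Vrᵀ h₁‖ +
            ‖h₂‖ / ‖Matrix.toEuclideanLin Vrᵀ h₂‖) ^ 2 := by
  classical
  set σr : ℝ := σ ⟨r, hr⟩ with hσrdef
  set σr1 : ℝ := σ ⟨r - 1, by omega⟩ with hσr1def
  have hσr1pos : 0 < σr1 := hσr
  have hσrpos : 0 ≤ σr := hσ0 _
  -- the surrogate matrix N
  set N : Matrix (Fin k) (Fin d) ℝ := diagonal σ * Vᵀ with hN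
  -- Wᵀ W = Nᵀ N
  have hWN : Wᵀ * W = Nᵀ * N := by
    rw [hW, hN]
    simp only [Matrix.transpose_mul, Matrix.diagonal_transpose, Matrix.mul_assoc]
    rw [← Matrix.mul_assoc Uᵀ U, hU, Matrix.one_mul]
  -- vectors
  set x₁ : EuclideanSpace ℝ (Fin k) := Matrix.toEuclideanLin N h₁ with hx₁
  set x₂ : EuclideanSpace ℝ (Fin k) := Matrix.toEuclideanLin N h₂ with hx₂
  set y₁ : EuclideanSpace ℝ (Fin r) := Matrix.toEuclideanLin (Λr * Vrᵀ) h₁ with hy₁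
  set y₂ : EuclideanSpace ℝ (Fin r) := Matrix.toEuclideanLin (Λr * Vrᵀ) h₂ with hy₂
  set v₁ : EuclideanSpace ℝ (Fin r) := Matrix.toEuclideanLin Vrᵀ h₁ with hv₁
  set v₂ : EuclideanSpace ℝ (Fin r) := Matrix.toEuclideanLin Vrᵀ h₂ with hv₂
  set u₁ : EuclideanSpace ℝ (Fin k) := Matrix.toEuclideanLin Vᵀ h₁ with hu₁
  set u₂ : EuclideanSpace ℝ (Fin k) := Matrix.toEuclideanLin Vᵀ h₂ with hu₂
  -- coordinates
  have hxcoord : ∀ (h : EuclideanSpace ℝ (Fin d)) (l : Fin k),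
      Matrix.toEuclideanLin N h l = σ l * Matrix.toEuclideanLin Vᵀ h l := by
    intro h l
    rw [tsvd_coord, tsvd_coord, Finset.mul_sum]
    refine Finset.sum_congr rfl fun j _ => ?_
    rw [hN, Matrix.diagonal_mul]
    ring
  have hvcoord : ∀ (h : EuclideanSpace ℝ (Fin d)) (j : Fin r),
      Matrix.toEuclideanLin Vrᵀ h j = Matrix.toEuclideanLin Vᵀ h (Fin.castLE hr.le j) := by
    intro h j
    rw [tsvd_coord, tsvd_coord]
    refine Finset.sum_congr rfl fun i _ => ?_
    rw [hVr]
    rfl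
  have hycoord : ∀ (h : EuclideanSpace ℝ (Fin d)) (j : Fin r),
      Matrix.toEuclideanLin (Λr * Vrᵀ) h j
        = σ (Fin.castLE hr.le j) * Matrix.toEuclideanLin Vrᵀ h j := by
    intro h j
    rw [tsvd_coord, tsvd_coord, Finset.mul_sum]
    refine Finset.sum_congr rfl fun i _ => ?_
    rw [hΛr, Matrix.diagonal_mul]
    ring
  have hyx : ∀ (h : EuclideanSpace ℝ (Fin d)) (j : Fin r),
      Matrix.toEuclideanLin (Λr * Vrᵀ) h j
        = Matrix.toEuclideanLin N h (Fin.castLE hr.le j) := by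
    intro h j
    rw [hycoord, hvcoord, hxcoord]
  -- ‖u‖ ≤ ‖h‖
  have hu_le : ∀ (h : EuclideanSpace ℝ (Fin d)),
      ‖Matrix.toEuclideanLin Vᵀ h‖ ≤ ‖h‖ := by
    intro h
    set u : EuclideanSpace ℝ (Fin k) := Matrix.toEuclideanLin Vᵀ h with hu
    have hVu : ‖Matrix.toEuclideanLin V u‖ = ‖u‖ := by
      have e1 : (inner ℝ (Matrix.toEuclideanLin V u) (Matrix.toEuclideanLin V u) : ℝ)
          = (inner ℝ u u : ℝ) := by
        rw [tsvd_inner_eq, hV, Matrix.one_mulVec, tsvd_inner_coords]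
        rfl
      have e2 : ‖Matrix.toEuclideanLin V u‖ ^ 2 = ‖u‖ ^ 2 := by
        rw [← real_inner_self_eq_norm_sq, ← real_inner_self_eq_norm_sq, e1]
      have := tsvd_sq_le (norm_nonneg u) e2.le
      have := tsvd_sq_le (norm_nonneg (Matrix.toEuclideanLin V u)) e2.ge
      linarith
    have e3 : ‖u‖ ^ 2 = (inner ℝ h (Matrix.toEuclideanLin V u) : ℝ) := by
      rw [← real_inner_self_eq_norm_sq, hu, tsvd_adj, Matrix.transpose_transpose]
    have e4 : (inner ℝ h (Matrix.toEuclideanLin V u) : ℝ)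
        ≤ ‖h‖ * ‖Matrix.toEuclideanLin V u‖ := real_inner_le_norm _ _
    rw [hVu] at e4
    rcases eq_or_lt_of_le (norm_nonneg u) with h0 | h0
    · rw [← h0]; exact norm_nonneg h
    · have : ‖u‖ ^ 2 ≤ ‖h‖ * ‖u‖ := by rw [e3]; exact e4
      nlinarith
  -- norm of Wh equals norm of Nh ; inner ℝ too
  have hinnerWN : ∀ (f g : EuclideanSpace ℝ (Fin d)),
      (inner ℝ (Matrix.toEuclideanLin W f) (Matrix.toEuclideanLin W g) : ℝ)
        = inner ℝ (Matrix.toEuclideanLin N f) (Matrix.toEuclideanLin N g) := by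
    intro f g
    rw [tsvd_inner_eq, tsvd_inner_eq, hWN]
  have hnormWN : ∀ (f : EuclideanSpace ℝ (Fin d)),
      ‖Matrix.toEuclideanLin W f‖ = ‖Matrix.toEuclideanLin N f‖ := by
    intro f
    have e : ‖Matrix.toEuclideanLin W f‖ ^ 2 = ‖Matrix.toEuclideanLin N f‖ ^ 2 := by
      rw [← real_inner_self_eq_norm_sq, ← real_inner_self_eq_norm_sq, hinnerWN]
    have := tsvd_sq_le (norm_nonneg (Matrix.toEuclideanLin N f)) e.le
    have := tsvd_sq_le (norm_nonneg (Matrix.toEuclideanLin W f)) e.ge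
    linarith
  have hscosW : scos (Matrix.toEuclideanLin W h₁) (Matrix.toEuclideanLin W h₂)
      = scos x₁ x₂ := by
    rw [scos, scos, hinnerWN, hnormWN, hnormWN, hx₁, hx₂]
  rw [hscosW]
  -- basic positivity
  have hv₁pos : 0 < ‖v₁‖ := norm_pos_iff.mpr hV1
  have hv₂pos : 0 < ‖v₂‖ := norm_pos_iff.mpr hV2
  -- p ≥ σr1 * ‖v‖
  have hplow : ∀ (h : EuclideanSpace ℝ (Fin d)),
      σr1 * ‖Matrix.toEuclideanLin Vrᵀ h‖ ≤ ‖Matrix.toEuclideanLin (Λr * Vrᵀ) h‖ := by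
    intro h
    refine tsvd_sq_le (norm_nonneg _) ?_
    rw [mul_pow, tsvd_norm_sq, tsvd_norm_sq, Finset.mul_sum]
    refine Finset.sum_le_sum fun j _ => ?_
    rw [hycoord]
    have hle : σr1 ≤ σ (Fin.castLE hr.le j) := by
      apply hσmono
      have := j.isLt
      exact Fin.mk_le_mk.mpr (by omega)
    have h2 : σr1 ^ 2 ≤ σ (Fin.castLE hr.le j) ^ 2 := by nlinarith
    have := sq_nonneg (Matrix.toEuclideanLin Vrᵀ h j)
    nlinarith
  -- sum splits
  have hsplit : ∀ (f g : EuclideanSpace ℝ (Fin d)),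
      (inner ℝ (Matrix.toEuclideanLin N f) (Matrix.toEuclideanLin N g) : ℝ)
        = (inner ℝ (Matrix.toEuclideanLin (Λr * Vrᵀ) f) (Matrix.toEuclideanLin (Λr * Vrᵀ) g) : ℝ)
          + ∑ l ∈ Finset.Ico r k,
              (if hl : l < k then
                Matrix.toEuclideanLin N f ⟨l, hl⟩ * Matrix.toEuclideanLin N g ⟨l, hl⟩ else 0) := by
    intro f g
    rw [tsvd_inner_coords, tsvd_inner_coords,
      tsvd_split_sum hr.le (fun l => Matrix.toEuclideanLin N f l * Matrix.toEuclideanLin N g l)]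
    congr 1
    exact Finset.sum_congr rfl fun j _ => by rw [hyx, hyx]
  -- bound on the tail sums
  have htail : ∀ (h : EuclideanSpace ℝ (Fin d)),
      ∑ l ∈ Finset.Ico r k,
          (if hl : l < k then
            Matrix.toEuclideanLin N h ⟨l, hl⟩ * Matrix.toEuclideanLin N h ⟨l, hl⟩ else 0)
        ≤ (σr * ‖h‖) ^ 2 := by
    intro h
    have step : ∑ l ∈ Finset.Ico r k,
          (if hl : l < k then
            Matrix.toEuclideanLin N h ⟨l, hl⟩ * Matrix.toEuclideanLin N h ⟨l, hl⟩ else 0)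
        ≤ σr ^ 2 * ∑ l ∈ Finset.Ico r k,
            (if hl : l < k then
              Matrix.toEuclideanLin Vᵀ h ⟨l, hl⟩ * Matrix.toEuclideanLin Vᵀ h ⟨l, hl⟩ else 0) := by
      rw [Finset.mul_sum]
      refine Finset.sum_le_sum fun l hl => ?_
      rw [Finset.mem_Ico] at hl
      rcases hl with ⟨hrl, hlk⟩
      rw [dif_pos hlk, dif_pos hlk, hxcoord]
      have hle : σ ⟨l, hlk⟩ ≤ σr := by
        apply hσmono
        exact Fin.mk_le_mk.mpr hrl
      have h0 : 0 ≤ σ ⟨l, hlk⟩ := hσ0 _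
      have h2 : σ ⟨l, hlk⟩ ^ 2 ≤ σr ^ 2 := by nlinarith
      have := sq_nonneg (Matrix.toEuclideanLin Vᵀ h ⟨l, hlk⟩)
      nlinarith
    have step2 : ∑ l ∈ Finset.Ico r k,
          (if hl : l < k then
            Matrix.toEuclideanLin Vᵀ h ⟨l, hl⟩ * Matrix.toEuclideanLin Vᵀ h ⟨l, hl⟩ else 0)
        ≤ ‖h‖ ^ 2 := by
      have e : ∑ l ∈ Finset.Ico r k,
            (if hl : l < k then
              Matrix.toEuclideanLin Vᵀ h ⟨l, hl⟩ * Matrix.toEuclideanLin Vᵀ h ⟨l, hl⟩ else 0)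
          = ‖Matrix.toEuclideanLin Vᵀ h‖ ^ 2
            - ∑ j : Fin r, Matrix.toEuclideanLin Vᵀ h (Fin.castLE hr.le j)
                * Matrix.toEuclideanLin Vᵀ h (Fin.castLE hr.le j) := by
        rw [tsvd_norm_sq,
          tsvd_split_sum hr.le
            (fun l => Matrix.toEuclideanLin Vᵀ h l * Matrix.toEuclideanLin Vᵀ h l)]
        ring
      have hnn : 0 ≤ ∑ j : Fin r, Matrix.toEuclideanLin Vᵀ h (Fin.castLE hr.le j)
          * Matrix.toEuclideanLin Vᵀ h (Fin.castLE hr.le j) :=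
        Finset.sum_nonneg fun j _ => mul_self_nonneg _
      have hub := hu_le h
      have : ‖Matrix.toEuclideanLin Vᵀ h‖ ^ 2 ≤ ‖h‖ ^ 2 := by
        have := norm_nonneg (Matrix.toEuclideanLin Vᵀ h)
        nlinarith
      linarith [e]
    calc _ ≤ σr ^ 2 * ∑ l ∈ Finset.Ico r k,
            (if hl : l < k then
              Matrix.toEuclideanLin Vᵀ h ⟨l, hl⟩ * Matrix.toEuclideanLin Vᵀ h ⟨l, hl⟩ else 0) :=
          step
      _ ≤ σr ^ 2 * ‖h‖ ^ 2 := by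
          have : (0:ℝ) ≤ σr ^ 2 := sq_nonneg _
          exact mul_le_mul_of_nonneg_left step2 this
      _ = (σr * ‖h‖) ^ 2 := by ring
  -- apply key inequality
  have happ := tsvd_key_ineq
    (inner ℝ x₁ x₂ : ℝ) (inner ℝ y₁ y₂ : ℝ) ‖y₁‖ ‖y₂‖ (σr * ‖h₁‖) (σr * ‖h₂‖)
    (σr / σr1 * (‖h₁‖ / ‖v₁‖)) (σr / σr1 * (‖h₂‖ / ‖v₂‖)) ‖x₁‖ ‖x₂‖
    (lt_of_lt_of_le (by positivity) (hplow h₁))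
    (lt_of_lt_of_le (by positivity) (hplow h₂))
    (by positivity) (by positivity) (by positivity) (by positivity)
    (abs_real_inner_le_norm _ _)
    (by
      -- |a - b| ≤ q₁ q₂
      have e1 := hsplit h₁ h₂
      have e2 : (inner ℝ x₁ x₂ : ℝ) - (inner ℝ y₁ y₂ : ℝ)
          = ∑ l ∈ Finset.Ico r k,
              (if hl : l < k then x₁ ⟨l, hl⟩ * x₂ ⟨l, hl⟩ else 0) := by
        rw [hx₁, hx₂, hy₁, hy₂] at *
        linarith [e1]
      rw [e2]
      refine tsvd_sq_le (by positivity) ?_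
      have cs := Finset.sum_mul_sq_le_sq_mul_sq (Finset.Ico r k)
        (fun l => if hl : l < k then x₁ ⟨l, hl⟩ else 0)
        (fun l => if hl : l < k then x₂ ⟨l, hl⟩ else 0)
      have e3 : ∑ l ∈ Finset.Ico r k,
            (if hl : l < k then x₁ ⟨l, hl⟩ else 0) * (if hl : l < k then x₂ ⟨l, hl⟩ else 0)
          = ∑ l ∈ Finset.Ico r k, (if hl : l < k then x₁ ⟨l, hl⟩ * x₂ ⟨l, hl⟩ else 0) := by
        refine Finset.sum_congr rfl fun l hl => ?_
        by_cases h : l < k <;> simp [h]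
      have e4 : ∀ (z : EuclideanSpace ℝ (Fin k)),
          ∑ l ∈ Finset.Ico r k, (if hl : l < k then z ⟨l, hl⟩ else 0) ^ 2
            = ∑ l ∈ Finset.Ico r k, (if hl : l < k then z ⟨l, hl⟩ * z ⟨l, hl⟩ else 0) := by
        intro z
        refine Finset.sum_congr rfl fun l hl => ?_
        by_cases h : l < k <;> simp [h, sq]
      rw [e3, e4, e4] at cs
      rw [sq_abs]
      calc (∑ l ∈ Finset.Ico r k, (if hl : l < k then x₁ ⟨l, hl⟩ * x₂ ⟨l, hl⟩ else 0)) ^ 2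
          ≤ (∑ l ∈ Finset.Ico r k, (if hl : l < k then x₁ ⟨l, hl⟩ * x₁ ⟨l, hl⟩ else 0))
            * ∑ l ∈ Finset.Ico r k, (if hl : l < k then x₂ ⟨l, hl⟩ * x₂ ⟨l, hl⟩ else 0) := cs
        _ ≤ (σr * ‖h₁‖) ^ 2 * (σr * ‖h₂‖) ^ 2 := by
            have t1 := htail h₁
            have t2 := htail h₂
            rw [← hx₁] at t1
            rw [← hx₂] at t2
            have nn1 : (0:ℝ) ≤ ∑ l ∈ Finset.Ico r k,
                (if hl : l < k then x₁ ⟨l, hl⟩ * x₁ ⟨l, hl⟩ else 0) :=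
              Finset.sum_nonneg fun l _ => by
                by_cases h : l < k <;> simp [h, mul_self_nonneg]
            have nn2 : (0:ℝ) ≤ ∑ l ∈ Finset.Ico r k,
                (if hl : l < k then x₂ ⟨l, hl⟩ * x₂ ⟨l, hl⟩ else 0) :=
              Finset.sum_nonneg fun l _ => by
                by_cases h : l < k <;> simp [h, mul_self_nonneg]
            exact mul_le_mul t1 t2 nn2 (sq_nonneg _)
        _ = (σr * ‖h₁‖ * (σr * ‖h₂‖)) ^ 2 := by ring)
    (by
      -- q₁ ≤ t₁ p₁
      have hp := hplow h₁
      rw [← hv₁] at hp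
      have e : σr / σr1 * (‖h₁‖ / ‖v₁‖) * (σr1 * ‖v₁‖) = σr * ‖h₁‖ := by
        field_simp
      calc σr * ‖h₁‖ = σr / σr1 * (‖h₁‖ / ‖v₁‖) * (σr1 * ‖v₁‖) := e.symm
        _ ≤ σr / σr1 * (‖h₁‖ / ‖v₁‖) * ‖y₁‖ := by
            have : (0:ℝ) ≤ σr / σr1 * (‖h₁‖ / ‖v₁‖) := by positivity
            exact mul_le_mul_of_nonneg_left hp this)
    (by
      have hp := hplow h₂
      rw [← hv₂] at hp
      have e : σr / σr1 * (‖h₂‖ / ‖v₂‖) * (σr1 * ‖v₂‖) = σr * ‖h₂‖ := by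
        field_simp
      calc σr * ‖h₂‖ = σr / σr1 * (‖h₂‖ / ‖v₂‖) * (σr1 * ‖v₂‖) := e.symm
        _ ≤ σr / σr1 * (‖h₂‖ / ‖v₂‖) * ‖y₂‖ := by
            have : (0:ℝ) ≤ σr / σr1 * (‖h₂‖ / ‖v₂‖) := by positivity
            exact mul_le_mul_of_nonneg_left hp this)
    (by
      have e1 := hsplit h₁ h₁
      have t1 := htail h₁
      rw [← hx₁, ← hy₁] at e1
      rw [← hx₁] at t1
      rw [real_inner_self_eq_norm_sq, real_inner_self_eq_norm_sq] at e1
      linarith)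
    (by
      have e1 := hsplit h₂ h₂
      have t1 := htail h₂
      rw [← hx₂, ← hy₂] at e1
      rw [← hx₂] at t1
      rw [real_inner_self_eq_norm_sq, real_inner_self_eq_norm_sq] at e1
      linarith)
    (by
      have e1 := hsplit h₁ h₁
      rw [← hx₁, ← hy₁] at e1
      rw [real_inner_self_eq_norm_sq, real_inner_self_eq_norm_sq] at e1
      have nn : (0:ℝ) ≤ ∑ l ∈ Finset.Ico r k,
          (if hl : l < k then x₁ ⟨l, hl⟩ * x₁ ⟨l, hl⟩ else 0) :=
        Finset.sum_nonneg fun l _ => by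
          by_cases h : l < k <;> simp [h, mul_self_nonneg]
      refine tsvd_sq_le (norm_nonneg x₁) ?_
      linarith)
    (by
      have e1 := hsplit h₂ h₂
      rw [← hx₂, ← hy₂] at e1
      rw [real_inner_self_eq_norm_sq, real_inner_self_eq_norm_sq] at e1
      have nn : (0:ℝ) ≤ ∑ l ∈ Finset.Ico r k,
          (if hl : l < k then x₂ ⟨l, hl⟩ * x₂ ⟨l, hl⟩ else 0) :=
        Finset.sum_nonneg fun l _ => by
          by_cases h : l < k <;> simp [h, mul_self_nonneg]
      refine tsvd_sq_le (norm_nonneg x₂) ?_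
      linarith)
  -- conclude
  unfold scos
  have final : (1 / 2 : ℝ) * (σr / σr1) ^ 2 * (‖h₁‖ / ‖v₁‖ + ‖h₂‖ / ‖v₂‖) ^ 2
      = (1 / 2) * (σr / σr1 * (‖h₁‖ / ‖v₁‖) + σr / σr1 * (‖h₂‖ / ‖v₂‖)) ^ 2 := by
    ring
  rw [final]
  exact happ
end

section
/- Suppose Σⱼ |α'ⱼ − αⱼ| ≤ δ_A, Σⱼ α'ⱼ ‖v'ⱼ − vⱼ‖ ≤ λ‖v'ᵢ − vᵢ‖ for some λ ≥ 1, all ‖vⱼ‖, ‖v'ⱼ‖ ∈ [V_min, V_max], and the outputs h = Σⱼ αⱼvⱼ, h' = Σⱼ α'ⱼv'ⱼ satisfy ‖h‖, ‖h'‖ ≥ H_min > 0. Then 1 − S_cos(h, h') ≤ C·(1 − S_cos(vᵢ, v'ᵢ)) + ε, where C = (λ V_max / H_min)² and ε = (2XY + Y²)/(2H_min²) with X = λV_max√(2(1 − S_cos(vᵢ, v'ᵢ))) and Y = λ(V_max − V_min) + δ_A V_max. -/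
lemma scos_le_one {d : ℕ} (x y : EuclideanSpace ℝ (Fin d)) : scos x y ≤ 1 := by
  unfold scos
  rcases le_or_gt (‖x‖ * ‖y‖) 0 with hc | hc
  · have : ‖x‖ * ‖y‖ = 0 := le_antisymm hc (by positivity)
    rw [this, div_zero]; norm_num
  · rw [div_le_one hc]; exact real_inner_le_norm x y

lemma one_sub_scos_le {d : ℕ} (x y : EuclideanSpace ℝ (Fin d)) {Hmin : ℝ} (hH : 0 < Hmin)
    (hx : Hmin ≤ ‖x‖) (hy : Hmin ≤ ‖y‖) :
    1 - scos x y ≤ ‖x - y‖ ^ 2 / (2 * Hmin ^ 2) := by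
  have hx0 : 0 < ‖x‖ := hH.trans_le hx
  have hy0 : 0 < ‖y‖ := hH.trans_le hy
  have hxy : 0 < ‖x‖ * ‖y‖ := mul_pos hx0 hy0
  have hns : ‖x - y‖ ^ 2 = ‖x‖^2 - 2 * (inner ℝ x y : ℝ) + ‖y‖^2 := by
    rw [@norm_sub_sq_real]
  have h1 : 1 - scos x y = (‖x‖*‖y‖ - (inner ℝ x y : ℝ)) / (‖x‖*‖y‖) := by
    rw [scos, sub_div, eq_comm, sub_eq_sub_iff_sub_eq_sub, div_self hxy.ne']
    simp
  rw [h1]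
  have hnum : ‖x‖*‖y‖ - (inner ℝ x y : ℝ) ≤ ‖x - y‖^2 / 2 := by
    rw [hns]; nlinarith [sq_nonneg (‖x‖ - ‖y‖)]
  calc (‖x‖*‖y‖ - (inner ℝ x y : ℝ)) / (‖x‖*‖y‖) ≤ (‖x-y‖^2/2) / (Hmin^2) := by
        apply div_le_div₀ (by positivity) hnum (by positivity)
        nlinarith
    _ = ‖x - y‖^2 / (2 * Hmin^2) := by ring

lemma norm_sub_le_bound {d : ℕ} (x y : EuclideanSpace ℝ (Fin d)) {Vmin Vmax : ℝ}
    (hx1 : Vmin ≤ ‖x‖) (hx2 : ‖x‖ ≤ Vmax) (hy1 : Vmin ≤ ‖y‖) (hy2 : ‖y‖ ≤ Vmax) :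
    ‖y - x‖ ≤ (Vmax - Vmin) + Vmax * Real.sqrt (2 * (1 - scos x y)) := by
  have hVmax : 0 ≤ Vmax := (norm_nonneg x).trans hx2
  have hsq : 0 ≤ Real.sqrt (2 * (1 - scos x y)) := Real.sqrt_nonneg _
  by_cases hx : x = 0
  · have : scos x y = 0 := by simp [scos, hx]
    rw [this] at hsq ⊢
    have hVmin : Vmin ≤ 0 := by simpa [hx] using hx1
    have : ‖y - x‖ = ‖y‖ := by simp [hx]
    nlinarith
  by_cases hy : y = 0
  · have : scos x y = 0 := by simp [scos, hy]
    rw [this] at hsq ⊢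
    have hVmin : Vmin ≤ 0 := by simpa [hy] using hy1
    have : ‖y - x‖ = ‖x‖ := by simp [hy]
    nlinarith
  have ha : (0:ℝ) < ‖x‖ := norm_pos_iff.mpr hx
  have hb : (0:ℝ) < ‖y‖ := norm_pos_iff.mpr hy
  set w : EuclideanSpace ℝ (Fin d) := (‖y‖ / ‖x‖) • x with hw
  have h1 : ‖w - x‖ = |‖y‖ - ‖x‖| := by
    have hwx : w - x = (‖y‖/‖x‖ - 1) • x := by rw [sub_smul, one_smul]
    rw [hwx, norm_smul, Real.norm_eq_abs]
    rw [show ‖y‖/‖x‖ - 1 = (‖y‖ - ‖x‖)/‖x‖ by field_simp]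
    rw [abs_div, abs_of_pos ha]
    field_simp
  have hSle : scos x y ≤ 1 := scos_le_one x y
  have h2 : ‖y - w‖^2 = 2 * ‖y‖^2 * (1 - scos x y) := by
    rw [@norm_sub_sq_real, hw, norm_smul, real_inner_smul_right, Real.norm_eq_abs,
      abs_of_pos (div_pos hb ha), scos, real_inner_comm y x]
    field_simp
    ring
  have h3 : ‖y - w‖ ≤ Vmax * Real.sqrt (2 * (1 - scos x y)) := by
    have hle : ‖y - w‖^2 ≤ (Vmax * Real.sqrt (2 * (1 - scos x y)))^2 := by
      rw [h2, mul_pow, Real.sq_sqrt (by linarith)]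
      have hb2 : ‖y‖^2 ≤ Vmax^2 := by nlinarith
      nlinarith [hb2, hSle]
    calc ‖y - w‖ = Real.sqrt (‖y - w‖^2) := (Real.sqrt_sq (norm_nonneg _)).symm
      _ ≤ Real.sqrt ((Vmax * Real.sqrt (2 * (1 - scos x y)))^2) := Real.sqrt_le_sqrt hle
      _ = Vmax * Real.sqrt (2 * (1 - scos x y)) := Real.sqrt_sq (by positivity)
  have htri : ‖y - x‖ ≤ ‖y - w‖ + ‖w - x‖ := by
    calc ‖y - x‖ = ‖(y - w) + (w - x)‖ := by abel_nf
      _ ≤ ‖y - w‖ + ‖w - x‖ := norm_add_le _ _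
  have habs : |‖y‖ - ‖x‖| ≤ Vmax - Vmin := abs_sub_le_iff.mpr ⟨by linarith, by linarith⟩
  linarith [h1 ▸ habs, htri, h3]

theorem attention_output_similarity_bound {n d : ℕ}
    (α α' : Fin n → ℝ) (hα : ∀ j, 0 ≤ α j) (hα' : ∀ j, 0 ≤ α' j)
    (v v' : Fin n → EuclideanSpace ℝ (Fin d)) (i : Fin n)
    (δA lam Vmin Vmax Hmin : ℝ)
    (hδA : ∑ j, |α' j - α j| ≤ δA)
    (hlam : 1 ≤ lam)
    (hdrift : ∑ j, α' j * ‖v' j - v j‖ ≤ lam * ‖v' i - v i‖)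
    (hv : ∀ j, Vmin ≤ ‖v j‖ ∧ ‖v j‖ ≤ Vmax)
    (hv' : ∀ j, Vmin ≤ ‖v' j‖ ∧ ‖v' j‖ ≤ Vmax)
    (h h' : EuclideanSpace ℝ (Fin d))
    (hh : h = ∑ j, α j • v j) (hh' : h' = ∑ j, α' j • v' j)
    (hHmin : 0 < Hmin) (hhn : Hmin ≤ ‖h‖) (hhn' : Hmin ≤ ‖h'‖) :
    1 - scos h h' ≤
      (lam * Vmax / Hmin) ^ 2 * (1 - scos (v i) (v' i)) +
        (2 * (lam * Vmax * Real.sqrt (2 * (1 - scos (v i) (v' i)))) *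
              (lam * (Vmax - Vmin) + δA * Vmax) +
            (lam * (Vmax - Vmin) + δA * Vmax) ^ 2) /
          (2 * Hmin ^ 2) := by
  have hVmax : 0 ≤ Vmax := (norm_nonneg (v i)).trans (hv i).2
  have hlam0 : (0:ℝ) ≤ lam := zero_le_one.trans hlam
  have hδA0 : 0 ≤ δA := le_trans (Finset.sum_nonneg fun j _ => abs_nonneg _) hδA
  set S : ℝ := 1 - scos (v i) (v' i) with hSdef
  have hS0 : 0 ≤ S := by have := scos_le_one (v i) (v' i); simp [hSdef]; linarith
  set X : ℝ := lam * Vmax * Real.sqrt (2 * S) with hXdef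
  set Y : ℝ := lam * (Vmax - Vmin) + δA * Vmax with hYdef
  have hX0 : 0 ≤ X := by positivity
  -- drift decomposition
  have hsum : ‖h' - h‖ ≤ (∑ j, α' j * ‖v' j - v j‖) + ∑ j, |α' j - α j| * ‖v j‖ := by
    rw [hh, hh', ← Finset.sum_sub_distrib, ← Finset.sum_add_distrib]
    refine (norm_sum_le _ _).trans (Finset.sum_le_sum fun j _ => ?_)
    have hsplit : α' j • v' j - α j • v j
        = α' j • (v' j - v j) + (α' j - α j) • v j := by
      rw [smul_sub, sub_smul]; abel
    rw [hsplit]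
    refine (norm_add_le _ _).trans ?_
    rw [norm_smul, norm_smul, Real.norm_eq_abs, Real.norm_eq_abs, abs_of_nonneg (hα' j)]
  have h2 : ∑ j, |α' j - α j| * ‖v j‖ ≤ δA * Vmax := by
    calc ∑ j, |α' j - α j| * ‖v j‖ ≤ ∑ j, |α' j - α j| * Vmax :=
          Finset.sum_le_sum fun j _ => mul_le_mul_of_nonneg_left (hv j).2 (abs_nonneg _)
      _ = (∑ j, |α' j - α j|) * Vmax := by rw [Finset.sum_mul]
      _ ≤ δA * Vmax := mul_le_mul_of_nonneg_right hδA hVmax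
  have hvi : ‖v' i - v i‖ ≤ (Vmax - Vmin) + Vmax * Real.sqrt (2 * S) :=
    norm_sub_le_bound (v i) (v' i) (hv i).1 (hv i).2 (hv' i).1 (hv' i).2
  have hD : ‖h - h'‖ ≤ X + Y := by
    rw [norm_sub_rev]
    have h1 : ∑ j, α' j * ‖v' j - v j‖ ≤ lam * ((Vmax - Vmin) + Vmax * Real.sqrt (2 * S)) :=
      hdrift.trans (mul_le_mul_of_nonneg_left hvi hlam0)
    calc ‖h' - h‖ ≤ (∑ j, α' j * ‖v' j - v j‖) + ∑ j, |α' j - α j| * ‖v j‖ := hsum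
      _ ≤ lam * ((Vmax - Vmin) + Vmax * Real.sqrt (2 * S)) + δA * Vmax := add_le_add h1 h2
      _ = X + Y := by rw [hXdef, hYdef]; ring
  have hmain := one_sub_scos_le h h' hHmin hhn hhn'
  have hD2 : ‖h - h'‖ ^ 2 ≤ (X + Y) ^ 2 := pow_le_pow_left₀ (norm_nonneg _) hD 2
  have hX2 : X ^ 2 = lam ^ 2 * Vmax ^ 2 * (2 * S) := by
    rw [hXdef, mul_pow, mul_pow, Real.sq_sqrt (by linarith)]
  have hgoal : (lam * Vmax / Hmin) ^ 2 * S + (2 * X * Y + Y ^ 2) / (2 * Hmin ^ 2)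
      = (X + Y) ^ 2 / (2 * Hmin ^ 2) := by
    have hexp : (X + Y) ^ 2 = X ^ 2 + 2 * X * Y + Y ^ 2 := by ring
    rw [hexp, hX2]; field_simp; ring
  rw [hgoal]
  refine hmain.trans ?_
  gcongr
end
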